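/- Let K be an infinite field and f₁, …, f_m ∈ K[x₁, …, xₙ] with m ≥ n+2. Then there exist g₁, …, g_{n+1} ∈ K[x₁, …, xₙ], each a K-linear combination of f₁, …, f_m, such that √(f₁, …, f_m) = √(g₁, …, g_{n+1}). -/

import Mathlib

open MvPolynomial

-- homogeneous scaling
private lemma aeval_homog_smul {K A ι : Type*} [CommSemiring K] [CommSemiring A] [Algebra K A]
    {Q : MvPolynomial ι K} {d : ℕ} (hQ : Q.IsHomogeneous d) (r : A) (s : ι → A) :
    MvPolynomial.aeval (fun i => r * s i) Q = r ^ d * MvPolynomial.aeval s Q := by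
  conv_lhs => rw [Q.as_sum, map_sum]
  conv_rhs => rw [Q.as_sum, map_sum, Finset.mul_sum]
  refine Finset.sum_congr rfl fun σ hσ => ?_
  have hd : Finsupp.degree σ = d := by
    rw [Finsupp.degree_eq_weight_one]
    exact hQ (MvPolynomial.mem_support_iff.mp hσ)
  rw [aeval_monomial, aeval_monomial, Finsupp.prod, Finsupp.prod]
  simp_rw [mul_pow]
  rw [Finset.prod_mul_distrib, Finset.prod_pow_eq_pow_sum]
  have hsum : ∑ i ∈ σ.support, σ i = d := hd
  rw [hsum]
  ring


open scoped Classical in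
private noncomputable def monomialFinset (K : Type*) [Field K] (n N : ℕ) :
    Finset (MvPolynomial (Fin n) K) :=
  Finset.image
    (fun h : Fin n → Fin (N + 1) =>
      MvPolynomial.monomial (Finsupp.equivFunOnFinite.symm fun i => ((h i : ℕ))) (1 : K))
    Finset.univ

private lemma card_monomialFinset_le (K : Type*) [Field K] (n N : ℕ) :
    (monomialFinset K n N).card ≤ (N + 1) ^ n := by
  classical
  refine (Finset.card_image_le).trans ?_
  simp [Fintype.card_fun]

private lemma mem_span_monomialFinset {K : Type*} [Field K] {n N : ℕ}
    {p : MvPolynomial (Fin n) K} (hp : p.totalDegree ≤ N) :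
    p ∈ Submodule.span K ((monomialFinset K n N : Finset (MvPolynomial (Fin n) K)) : Set _) := by
  rw [p.as_sum]
  refine Submodule.sum_mem _ fun τ hτ => ?_
  have h1 : MvPolynomial.monomial τ (MvPolynomial.coeff τ p)
      = (MvPolynomial.coeff τ p) • MvPolynomial.monomial τ (1 : K) := by
    rw [MvPolynomial.smul_monomial]; rw [smul_eq_mul, mul_one]
  rw [h1]
  refine Submodule.smul_mem _ _ (Submodule.subset_span ?_)
  have hbound : ∀ i, τ i ≤ N := by
    intro i
    refine (Finsupp.le_degree i τ).trans ?_
    exact (MvPolynomial.le_totalDegree hτ).trans hp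
  classical
  refine Finset.mem_coe.mpr (Finset.mem_image.mpr ⟨fun i => ⟨τ i, Nat.lt_succ_of_le (hbound i)⟩,
    Finset.mem_univ _, ?_⟩)
  have : (Finsupp.equivFunOnFinite.symm fun i => (((⟨τ i, Nat.lt_succ_of_le (hbound i)⟩ : Fin (N+1)) : ℕ))) = τ := by
    apply Finsupp.ext
    intro i
    simp [Finsupp.equivFunOnFinite]
  rw [this]


private lemma kron_arith (n D : ℕ) (hD : 1 ≤ D) :
    ((n + 1) * ((n + 2) * D) ^ n * D + 1) ^ n < (((n + 2) * D) ^ n + 1) ^ (n + 1) := by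
  set c := (n + 2) * D with hc
  set t := c ^ n with ht
  have hc1 : 1 ≤ c := by
    have : 1 ≤ n + 2 := by omega
    calc 1 = 1 * 1 := by ring
    _ ≤ (n + 2) * D := Nat.mul_le_mul this hD
  have ht1 : 1 ≤ t := Nat.one_le_pow _ _ hc1
  have h1 : (n + 1) * t * D + 1 ≤ c * t := by
    calc (n + 1) * t * D + 1 ≤ (n + 1) * D * t + 1 * t := by
          have : (n + 1) * t * D = (n + 1) * D * t := by ring
          omega
        _ = ((n + 1) * D + 1) * t := by ring
        _ ≤ ((n + 2) * D) * t := by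
          refine Nat.mul_le_mul_right _ ?_
          have : (n + 1) * D + D ≤ (n + 2) * D := by ring_nf; omega
          omega
  calc ((n + 1) * t * D + 1) ^ n ≤ (c * t) ^ n := Nat.pow_le_pow_left h1 n
    _ = c ^ n * t ^ n := mul_pow _ _ _
    _ = t ^ (n + 1) := by rw [← ht, ← pow_succ']
    _ < (t + 1) ^ (n + 1) := Nat.pow_lt_pow_left (by omega) (by omega)

private lemma exists_homog_relation (K : Type*) [Field K] (n k : ℕ) (hk : n + 1 ≤ k)
    (f : Fin (k + 1) → MvPolynomial (Fin n) K) :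
    ∃ (d : ℕ) (Q : MvPolynomial (Fin (k + 1)) K),
      Q.IsHomogeneous d ∧ Q ≠ 0 ∧ MvPolynomial.aeval f Q = 0 := by
  classical
  by_contra hcon
  push_neg at hcon
  set D : ℕ := (Finset.univ.sup fun i => (f i).totalDegree) + 1 with hD
  have hD1 : 1 ≤ D := by omega
  have hfD : ∀ i, (f i).totalDegree ≤ D := by
    intro i
    have h := Finset.le_sup (f := fun i => (f i).totalDegree) (Finset.mem_univ i)
    rw [hD]
    exact h.trans (Nat.le_succ _)
  set t : ℕ := ((n + 2) * D) ^ n with htdef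
  set d : ℕ := (n + 1) * t with hddef
  -- the injection into monomial exponents of degree d
  have hsum_le : ∀ a : Fin (n + 1) → Fin (t + 1), (∑ j, ((a j : ℕ))) ≤ d := by
    intro a
    calc (∑ j, ((a j : ℕ))) ≤ ∑ _j : Fin (n + 1), t :=
          Finset.sum_le_sum fun j _ => Nat.lt_succ_iff.mp (a j).isLt
      _ = (n + 1) * t := by simp [Finset.sum_const, mul_comm]
  have hnk : n < k := by omega
  let castE : Fin (n + 1) → Fin (k + 1) := fun j => ⟨(j : ℕ), by omega⟩
  have hcastE_inj : Function.Injective castE := by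
    intro a b h
    simpa [castE, Fin.ext_iff] using h
  have hcastE_ne : ∀ j, castE j ≠ Fin.last k := by
    intro j h
    have : (j : ℕ) = k := congrArg Fin.val h
    have := j.isLt
    omega
  let σmap : (Fin (n + 1) → Fin (t + 1)) → (Fin (k + 1) →₀ ℕ) := fun a =>
    (∑ j, Finsupp.single (castE j) ((a j : ℕ))) + Finsupp.single (Fin.last k) (d - ∑ j, ((a j : ℕ)))
  have hσapply : ∀ a j, σmap a (castE j) = a j := by
    intro a j
    have h2 : (Finsupp.single (Fin.last k) (d - ∑ j', ((a j' : ℕ)))) (castE j) = 0 :=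
      Finsupp.single_eq_of_ne' (Ne.symm (hcastE_ne j))
    have h1 : (∑ j', Finsupp.single (castE j') ((a j' : ℕ))) (castE j) = a j := by
      rw [Finsupp.finset_sum_apply]
      rw [Finset.sum_eq_single j]
      · simp
      · intro b _ hb
        exact Finsupp.single_eq_of_ne' fun h => hb (hcastE_inj h)
      · intro h
        exact absurd (Finset.mem_univ j) h
    simp only [σmap, Finsupp.add_apply, h1, h2, add_zero]
  have hσinj : Function.Injective σmap := by
    intro a b hab
    funext j
    have h1 : ((a j : ℕ)) = ((b j : ℕ)) := by
      rw [← hσapply a j, ← hσapply b j, hab]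
    exact Fin.val_injective h1
  have hσdeg : ∀ a, Finsupp.degree (σmap a) = d := by
    intro a
    rw [Finsupp.degree_eq_weight_one]
    simp only [σmap, map_add, map_sum]
    have hws : ∀ (i : Fin (k + 1)) (e : ℕ), Finsupp.weight (1 : Fin (k+1) → ℕ) (Finsupp.single i e) = e := by
      intro i e
      rw [Finsupp.weight_apply, Finsupp.sum_single_index] <;> simp
    simp only [Pi.one_def] at hws
    simp only [hws]
    have := hsum_le a
    omega
  -- the family of evaluated monomials
  set W : Finset (MvPolynomial (Fin n) K) := monomialFinset K n (d * D) with hW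
  let v : (Fin (n + 1) → Fin (t + 1)) → MvPolynomial (Fin n) K := fun a =>
    MvPolynomial.aeval f (MvPolynomial.monomial (σmap a) (1 : K))
  have hvmem : ∀ a, v a ∈ Submodule.span K (W : Set (MvPolynomial (Fin n) K)) := by
    intro a
    refine mem_span_monomialFinset ?_
    have hv : v a = (σmap a).prod fun i e => f i ^ e := by
      show MvPolynomial.aeval f (MvPolynomial.monomial (σmap a) (1 : K)) = _
      rw [aeval_monomial, map_one, one_mul]
    rw [hv]
    rw [Finsupp.prod]
    refine (MvPolynomial.totalDegree_finset_prod _ _).trans ?_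
    calc ∑ i ∈ (σmap a).support, (f i ^ (σmap a) i).totalDegree
        ≤ ∑ i ∈ (σmap a).support, (σmap a) i * D := by
          refine Finset.sum_le_sum fun i _ => ?_
          exact (MvPolynomial.totalDegree_pow _ _).trans (Nat.mul_le_mul_left _ (hfD i))
      _ = (∑ i ∈ (σmap a).support, (σmap a) i) * D := by rw [Finset.sum_mul]
      _ = d * D := by rw [show (∑ i ∈ (σmap a).support, (σmap a) i) = Finsupp.degree (σmap a) from rfl, hσdeg]
  have hli : LinearIndependent K v := by
    rw [Fintype.linearIndependent_iff]
    intro c hc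
    set Q : MvPolynomial (Fin (k + 1)) K := ∑ a, MvPolynomial.monomial (σmap a) (c a) with hQdef
    have hQhom : Q.IsHomogeneous d :=
      MvPolynomial.IsHomogeneous.sum _ _ _ fun a _ => isHomogeneous_monomial _ (hσdeg a)
    have hQf : MvPolynomial.aeval f Q = 0 := by
      rw [hQdef, map_sum]
      rw [← hc]
      refine Finset.sum_congr rfl fun a _ => ?_
      have : MvPolynomial.monomial (σmap a) (c a) = c a • MvPolynomial.monomial (σmap a) (1 : K) := by
        rw [MvPolynomial.smul_monomial, smul_eq_mul, mul_one]
      rw [this, map_smul]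
    have hQ0 : Q = 0 := by
      by_contra h0
      exact hcon d Q hQhom h0 hQf
    intro a
    have := congrArg (MvPolynomial.coeff (σmap a)) hQ0
    rw [hQdef, MvPolynomial.coeff_sum] at this
    simp only [MvPolynomial.coeff_monomial, MvPolynomial.coeff_zero] at this
    rwa [Finset.sum_eq_single a (fun b _ hb => if_neg fun h => hb (hσinj h)) (fun h => absurd (Finset.mem_univ a) h), if_pos rfl] at this
  -- cardinality contradiction
  haveI : Module.Finite K (Submodule.span K (W : Set (MvPolynomial (Fin n) K))) :=
    FiniteDimensional.span_finset K W
  let w : (Fin (n + 1) → Fin (t + 1)) → Submodule.span K (W : Set (MvPolynomial (Fin n) K)) :=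
    fun a => ⟨v a, hvmem a⟩
  have hw : LinearIndependent K w := by
    refine LinearIndependent.of_comp (Submodule.span K (W : Set (MvPolynomial (Fin n) K))).subtype ?_
    convert hli
    rfl
  have hcard1 : Fintype.card (Fin (n + 1) → Fin (t + 1)) ≤
      Module.finrank K (Submodule.span K (W : Set (MvPolynomial (Fin n) K))) :=
    hw.fintype_card_le_finrank
  have hcard2 : Module.finrank K (Submodule.span K (W : Set (MvPolynomial (Fin n) K))) ≤ W.card :=
    finrank_span_finset_le_card W
  have hcard3 : W.card ≤ (d * D + 1) ^ n := card_monomialFinset_le K n (d * D)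
  have hcardι : Fintype.card (Fin (n + 1) → Fin (t + 1)) = (t + 1) ^ (n + 1) := by
    simp [Fintype.card_fun]
  have harith := kron_arith n D hD1
  rw [← htdef] at harith
  have : (t + 1) ^ (n + 1) ≤ ((n + 1) * t * D + 1) ^ n := by
    calc (t + 1) ^ (n + 1) = Fintype.card (Fin (n + 1) → Fin (t + 1)) := hcardι.symm
      _ ≤ (d * D + 1) ^ n := le_trans hcard1 (le_trans hcard2 hcard3)
      _ = ((n + 1) * t * D + 1) ^ n := by rw [hddef]
  omega

private lemma aeval_eq_eval'' {K σ : Type*} [CommSemiring K] (x : σ → K) (p : MvPolynomial σ K) :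
    MvPolynomial.aeval x p = MvPolynomial.eval x p := rfl

private lemma kron_reduce (K : Type*) [Field K] [Infinite K] (n k : ℕ) (hk : n + 1 ≤ k)
    (f : Fin (k + 1) → MvPolynomial (Fin n) K) :
    ∃ g : Fin k → MvPolynomial (Fin n) K,
      (∀ j, ∃ c : Fin (k + 1) → K, g j = ∑ i, MvPolynomial.C (c i) * f i) ∧
      (Ideal.span (Set.range f)).radical = (Ideal.span (Set.range g)).radical := by
  classical
  obtain ⟨d, Q, hQh, hQ0, hQf⟩ := exists_homog_relation K n k hk f
  set Q' : MvPolynomial (Fin (k + 1)) K := Q * MvPolynomial.X 0 with hQ'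
  have hQ'h : Q'.IsHomogeneous (d + 1) := hQh.mul (isHomogeneous_X _ _)
  have hQ'0 : Q' ≠ 0 := mul_ne_zero hQ0 (MvPolynomial.X_ne_zero 0)
  have hQ'f : MvPolynomial.aeval f Q' = 0 := by rw [hQ', map_mul, hQf, zero_mul]
  obtain ⟨z, hz⟩ : ∃ z : Fin (k + 1) → K, MvPolynomial.eval z Q' ≠ 0 := by
    by_contra h
    push_neg at h
    exact hQ'0 (MvPolynomial.funext fun x => by rw [h x, map_zero])
  have hz0 : z 0 ≠ 0 := by
    intro h0
    apply hz
    rw [hQ', MvPolynomial.eval_mul, MvPolynomial.eval_X, h0, mul_zero]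
  set w : Fin (k + 1) → K := fun i => (z 0)⁻¹ * z i with hwdef
  have hw0 : w 0 = 1 := inv_mul_cancel₀ hz0
  set a : K := MvPolynomial.eval w Q' with hadef
  have ha : a ≠ 0 := by
    have h1 : MvPolynomial.aeval w Q' = ((z 0)⁻¹) ^ (d + 1) * MvPolynomial.aeval z Q' :=
      aeval_homog_smul hQ'h ((z 0)⁻¹) z
    rw [aeval_eq_eval'', aeval_eq_eval''] at h1
    rw [hadef, h1]
    exact mul_ne_zero (pow_ne_zero _ (inv_ne_zero hz0)) hz
  set g : Fin k → MvPolynomial (Fin n) K :=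
    fun j => f j.succ - MvPolynomial.C (w j.succ) * f 0 with hgdef
  refine ⟨g, ?_, ?_⟩
  · intro j
    refine ⟨Fin.cons (-(w j.succ)) (fun i => if i = j then 1 else 0), ?_⟩
    rw [Fin.sum_univ_succ]
    simp only [Fin.cons_zero, Fin.cons_succ, map_neg]
    have hterm : ∀ i : Fin k,
        MvPolynomial.C (if i = j then (1 : K) else 0) * f i.succ
          = if i = j then f i.succ else 0 := by
      intro i
      split <;> simp
    rw [Finset.sum_congr rfl fun i _ => hterm i]
    rw [Finset.sum_ite_eq' Finset.univ j fun i => f i.succ, if_pos (Finset.mem_univ j)]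
    rw [hgdef]
    ring
  · set I : Ideal (MvPolynomial (Fin n) K) := Ideal.span (Set.range g) with hI
    set J : Ideal (MvPolynomial (Fin n) K) := Ideal.span (Set.range f) with hJ
    have hgJ : ∀ j, g j ∈ J := by
      intro j
      refine sub_mem (Ideal.subset_span ⟨j.succ, rfl⟩) ?_
      exact Ideal.mul_mem_left _ _ (Ideal.subset_span ⟨0, rfl⟩)
    have hgI : ∀ j, g j ∈ I := fun j => Ideal.subset_span ⟨j, rfl⟩
    -- key: f 0 ∈ radical I
    have hf0 : f 0 ∈ I.radical := by
      let φ := Ideal.Quotient.mkₐ K I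
      have hfv : ∀ i, φ (f i) = φ (MvPolynomial.C (w i) * f 0) := by
        intro i
        induction i using Fin.cases with
        | zero => rw [hw0, MvPolynomial.C_1, one_mul]
        | succ j =>
            have : φ (g j) = 0 := by
              rw [Ideal.Quotient.mkₐ_eq_mk, Ideal.Quotient.eq_zero_iff_mem]
              exact hgI j
            rw [hgdef] at this
            rw [map_sub, sub_eq_zero] at this
            exact this
      have h1 : φ (MvPolynomial.aeval f Q')
          = φ (MvPolynomial.aeval (fun i => MvPolynomial.C (w i) * f 0) Q') := by
        rw [MvPolynomial.comp_aeval_apply, MvPolynomial.comp_aeval_apply,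
          show (fun i => φ (f i)) = fun i => φ (MvPolynomial.C (w i) * f 0) from funext hfv]
      have h2 : MvPolynomial.aeval (fun i => MvPolynomial.C (w i) * f 0) Q'
          = f 0 ^ (d + 1) * MvPolynomial.C a := by
        have hcomm : (fun i => MvPolynomial.C (w i) * f 0)
            = fun i => f 0 * MvPolynomial.C (w i) := by
          funext i; ring
        rw [hcomm, aeval_homog_smul hQ'h (f 0) fun i => MvPolynomial.C (w i)]
        congr 1
        have h3 := MvPolynomial.comp_aeval_apply
          (f := w) (Algebra.ofId K (MvPolynomial (Fin n) K)) Q'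
        rw [aeval_eq_eval''] at h3
        rw [← hadef] at h3
        have h4 : ∀ x : K, (Algebra.ofId K (MvPolynomial (Fin n) K)) x = MvPolynomial.C x :=
          fun x => by rw [Algebra.ofId_apply, MvPolynomial.algebraMap_eq]
        simp only [h4] at h3
        exact h3.symm
      rw [hQ'f, map_zero, h2] at h1
      have hmem : f 0 ^ (d + 1) * MvPolynomial.C a ∈ I := by
        rw [← Ideal.Quotient.eq_zero_iff_mem, ← Ideal.Quotient.mkₐ_eq_mk (R₁ := K), ← h1]
      have hmem2 : f 0 ^ (d + 1) ∈ I := by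
        have hx : MvPolynomial.C a⁻¹ * (f 0 ^ (d + 1) * MvPolynomial.C a) = f 0 ^ (d + 1) := by
          rw [mul_comm (f 0 ^ (d + 1)) _, ← mul_assoc, ← MvPolynomial.C_mul,
            inv_mul_cancel₀ ha, MvPolynomial.C_1, one_mul]
        rw [← hx]
        exact Ideal.mul_mem_left _ _ hmem
      exact ⟨d + 1, hmem2⟩
    -- radical equality
    refine le_antisymm ?_ ?_
    · have hJrad : J ≤ I.radical := by
        rw [hJ, Ideal.span_le]
        rintro x ⟨i, rfl⟩
        induction i using Fin.cases with
        | zero => exact hf0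
        | succ j =>
            have : f j.succ = g j + MvPolynomial.C (w j.succ) * f 0 := by
              rw [hgdef]; ring
            rw [this]
            exact add_mem (Ideal.le_radical (hgI j)) (Ideal.mul_mem_left _ _ hf0)
      calc J.radical ≤ (I.radical).radical := Ideal.radical_mono hJrad
        _ = I.radical := Ideal.radical_idem _
    · refine Ideal.radical_mono ?_
      rw [hI, Ideal.span_le]
      rintro x ⟨j, rfl⟩
      exact hgJ j

private lemma kron_main (K : Type*) [Field K] [Infinite K] (n : ℕ) :
    ∀ m : ℕ, n + 1 ≤ m → ∀ f : Fin m → MvPolynomial (Fin n) K,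
      ∃ g : Fin (n + 1) → MvPolynomial (Fin n) K,
        (∀ j, ∃ c : Fin m → K, g j = ∑ i, MvPolynomial.C (c i) * f i) ∧
        (Ideal.span (Set.range f)).radical = (Ideal.span (Set.range g)).radical := by
  classical
  refine Nat.le_induction ?_ ?_
  · intro f
    refine ⟨f, fun j => ⟨fun i => if i = j then 1 else 0, ?_⟩, rfl⟩
    have hterm : ∀ i, MvPolynomial.C (if i = j then (1 : K) else 0) * f i
        = if i = j then f i else 0 := fun i => by split <;> simp
    rw [Finset.sum_congr rfl fun i _ => hterm i,
      Finset.sum_ite_eq' Finset.univ j f, if_pos (Finset.mem_univ j)]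
  · intro M hM ih f
    obtain ⟨g', hg'c, hg'r⟩ := kron_reduce K n M hM f
    obtain ⟨g, hgc, hgr⟩ := ih g'
    refine ⟨g, ?_, hg'r.trans hgr⟩
    intro j
    obtain ⟨e, he⟩ := hgc j
    choose c' hc' using hg'c
    refine ⟨fun i => ∑ l, e l * c' l i, ?_⟩
    calc g j = ∑ l, MvPolynomial.C (e l) * g' l := he
      _ = ∑ l, MvPolynomial.C (e l) * ∑ i, MvPolynomial.C (c' l i) * f i :=
          Finset.sum_congr rfl fun l _ => by rw [hc' l]
      _ = ∑ l, ∑ i, MvPolynomial.C (e l) * (MvPolynomial.C (c' l i) * f i) := by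
          refine Finset.sum_congr rfl fun l _ => ?_
          rw [Finset.mul_sum]
      _ = ∑ i, ∑ l, MvPolynomial.C (e l) * (MvPolynomial.C (c' l i) * f i) := Finset.sum_comm
      _ = ∑ i, MvPolynomial.C (∑ l, e l * c' l i) * f i := by
          refine Finset.sum_congr rfl fun i _ => ?_
          rw [map_sum, Finset.sum_mul]
          refine Finset.sum_congr rfl fun l _ => ?_
          rw [MvPolynomial.C_mul]
          ring

theorem stmt_19 (K : Type*) [Field K] [Infinite K] (n m : ℕ) (hn : 0 < n)
    (hm : n + 2 ≤ m) (f : Fin m → MvPolynomial (Fin n) K) :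
    ∃ g : Fin (n + 1) → MvPolynomial (Fin n) K,
      (∀ j, ∃ c : Fin m → K, g j = ∑ i, MvPolynomial.C (c i) * f i) ∧
      (Ideal.span (Set.range f)).radical = (Ideal.span (Set.range g)).radical := by
  exact kron_main K n m (by omega) f
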